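/- Let r ≥ 1 and let G be a simple graph in which every vertex is contained in a clique of size r+1. Then for every k, G has a proper k-coloring if and only if G is (k,r)-colorable; hence χ_r(G) = χ(G). -/

import Mathlib

/-- A conditional `(k,r)`-coloring (with color type `α` of size `k`):
(C1) adjacent vertices get different colors, and
(C2) every vertex `v` sees at least `min (d v) r` distinct colors on its neighborhood. -/
def IsCondColoring {V α : Type*} (G : SimpleGraph V) (r : ℕ) (c : V → α) : Prop :=
  (∀ ⦃u v : V⦄, G.Adj u v → c u ≠ c v) ∧
  ∀ v : V, min (G.neighborSet v).ncard r ≤ (c '' G.neighborSet v).ncard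

/-- The `r`-th order conditional chromatic number `χ_r(G)`. -/
noncomputable def condChromaticNumber {V : Type*} (G : SimpleGraph V) (r : ℕ) : ℕ∞ :=
  ⨅ k ∈ {k : ℕ | ∃ c : V → Fin k, IsCondColoring G r c}, (k : ℕ∞)

/-- If every vertex of `G` lies in a clique of size `r+1`, then `G` is properly
`k`-colorable iff it is `(k,r)`-colorable; hence `χ_r(G) = χ(G)`. -/
theorem stmt_4 {V : Type*} [Fintype V] (G : SimpleGraph V) (r : ℕ) (hr : 1 ≤ r)
    (hcl : ∀ v : V, ∃ s : Finset V, v ∈ s ∧ G.IsClique ↑s ∧ s.card = r + 1) :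
    (∀ k : ℕ, G.Colorable k ↔ ∃ c : V → Fin k, IsCondColoring G r c) ∧
    condChromaticNumber G r = G.chromaticNumber := by
  have key : ∀ k : ℕ, G.Colorable k ↔ ∃ c : V → Fin k, IsCondColoring G r c := by
    classical
    intro k
    constructor
    · rintro ⟨C⟩
      refine ⟨C, fun u v h => C.valid h, ?_⟩
      intro v
      obtain ⟨s, hvs, hclq, hcard⟩ := hcl v
      have hsub : ↑(s.erase v) ⊆ G.neighborSet v := by
        intro u hu
        simp only [Finset.coe_erase, Set.mem_diff, Set.mem_singleton_iff] at hu
        exact hclq hvs hu.1 (Ne.symm hu.2)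
      have hinj : Set.InjOn C ↑(s.erase v) := by
        intro a ha b hb hab
        by_contra hne
        simp only [Finset.coe_erase, Set.mem_diff] at ha hb
        exact C.valid (hclq ha.1 hb.1 hne) hab
      have h1 : ((C : V → Fin k) '' ↑(s.erase v)).ncard = r := by
        rw [Set.ncard_image_of_injOn hinj, Set.ncard_coe_finset,
          Finset.card_erase_of_mem hvs, hcard, Nat.add_sub_cancel]
      have h2 : ((C : V → Fin k) '' ↑(s.erase v)).ncard
          ≤ ((C : V → Fin k) '' G.neighborSet v).ncard :=
        Set.ncard_le_ncard (Set.image_mono hsub) (Set.toFinite _)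
      calc min (G.neighborSet v).ncard r ≤ r := min_le_right _ _
        _ ≤ _ := h1 ▸ h2
    · rintro ⟨c, h1, _⟩
      exact ⟨SimpleGraph.Coloring.mk c fun h => h1 h⟩
  refine ⟨key, ?_⟩
  have hset : {k : ℕ | ∃ c : V → Fin k, IsCondColoring G r c} = setOf G.Colorable := by
    ext k
    exact (key k).symm
  rw [condChromaticNumber, hset, SimpleGraph.chromaticNumber]
  rfl
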